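/- For z in the sector 0 ≤ arg z ≤ π/2, the function F(z) = e^{-iz²} Fr(z) satisfies |F(z)| ≤ 1/2. -/

import Mathlib

open MeasureTheory Set Complex Real Filter

noncomputable def cerf (z : ℂ) : ℂ :=
  2 / Real.sqrt Real.pi * ∫ t in (0:ℝ)..1, z * Complex.exp (-((t : ℂ) * z) ^ 2)

/-- The Fresnel integral `Fr(z) = (1/2) erfc(e^{-iπ/4} z)`. -/
noncomputable def Fr (z : ℂ) : ℂ :=
  (1 - cerf (Complex.exp (-(Real.pi / 4 : ℂ) * Complex.I) * z)) / 2

/-- `F(z) = e^{-iz²} Fr(z)`. -/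
noncomputable def Ffun (z : ℂ) : ℂ := Complex.exp (-Complex.I * z ^ 2) * Fr z

noncomputable def psiF (z : ℂ) : ℂ := ∫ u in Set.Ioi (0:ℝ), Complex.exp (-(z + (u:ℂ))^2)

lemma norm_exp_neg_sq_add (z : ℂ) (u : ℝ) :
    ‖Complex.exp (-(z + (u:ℂ))^2)‖ ≤ Real.exp (‖z‖ ^ 2) * Real.exp (-(1/2) * u^2) := by
  rw [Complex.norm_exp, ← Real.exp_add]
  apply Real.exp_le_exp.2
  have h : ((-(z + (u:ℂ))^2).re) = (z.im)^2 - (z.re + u)^2 := by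
    simp only [pow_two, Complex.neg_re, Complex.mul_re, Complex.add_re, Complex.add_im,
      Complex.ofReal_re, Complex.ofReal_im]
    ring
  rw [h]
  have habs : ‖z‖ ^ 2 = z.re^2 + z.im^2 := by
    rw [Complex.sq_norm, Complex.normSq_apply]; ring
  nlinarith [sq_nonneg (2*z.re + u)]

lemma cont_exp_neg_sq_add (z : ℂ) : Continuous fun u : ℝ => Complex.exp (-(z + (u:ℂ))^2) := by
  fun_prop

lemma integrableOn_psiF (z : ℂ) :
    IntegrableOn (fun u : ℝ => Complex.exp (-(z + (u:ℂ))^2)) (Set.Ioi 0) := by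
  apply Integrable.mono' (((integrable_exp_neg_mul_sq (by norm_num : (0:ℝ) < 1/2)).const_mul
    (Real.exp (‖z‖ ^ 2))).integrableOn)
    (cont_exp_neg_sq_add z).aestronglyMeasurable
  exact Filter.Eventually.of_forall fun u => norm_exp_neg_sq_add z u

lemma deriv_inner (x : ℂ) (u : ℝ) :
    HasDerivAt (fun w : ℂ => Complex.exp (-(w + (u:ℂ))^2))
      (-2 * (x + u) * Complex.exp (-(x + (u:ℂ))^2)) x := by
  have h1 : HasDerivAt (fun w : ℂ => -(w + (u:ℂ))^2) (-2 * (x + u)) x := by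
    have := ((hasDerivAt_id x).add_const (u:ℂ)).pow 2
    have h2 := this.neg
    refine h2.congr_deriv ?_
    simp only [id_eq]; ring
  have := h1.cexp
  refine this.congr_deriv ?_
  ring

lemma deriv_inner' (z x : ℂ) :
    HasDerivAt (fun w : ℂ => Complex.exp (-(z + w)^2))
      (-2 * (z + x) * Complex.exp (-(z + x)^2)) x := by
  have h1 : HasDerivAt (fun w : ℂ => -(z + w)^2) (-2 * (z + x)) x := by
    have := (((hasDerivAt_id x).const_add z).pow 2).neg
    refine this.congr_deriv ?_
    simp only [id_eq]; ring
  have := h1.cexp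
  refine this.congr_deriv ?_
  ring

lemma tendsto_exp_neg_sq_add (z : ℂ) :
    Tendsto (fun u : ℝ => Complex.exp (-(z + (u:ℂ))^2)) atTop (nhds 0) := by
  rw [tendsto_zero_iff_norm_tendsto_zero]
  apply squeeze_zero (fun u => norm_nonneg _) (fun u => norm_exp_neg_sq_add z u)
  rw [← mul_zero (Real.exp (‖z‖ ^ 2))]
  apply Tendsto.const_mul
  apply Real.tendsto_exp_atBot.comp
  apply Filter.Tendsto.const_mul_atTop_of_neg (by norm_num : (-(1/2):ℝ) < 0)
  exact tendsto_pow_atTop (by norm_num)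

lemma psiF_integral_deriv (z : ℂ) :
    ∫ u in Set.Ioi (0:ℝ), (-2 * (z + (u:ℂ)) * Complex.exp (-(z + (u:ℂ))^2)) =
      -Complex.exp (-z^2) := by
  have key := MeasureTheory.integral_Ioi_of_hasDerivAt_of_tendsto'
    (f := fun u : ℝ => Complex.exp (-(z + (u:ℂ))^2))
    (f' := fun u : ℝ => -2 * (z + (u:ℂ)) * Complex.exp (-(z + (u:ℂ))^2))
    (a := 0) (m := 0)
    (fun u _ => (deriv_inner' z (u:ℂ)).comp_ofReal) ?_ (tendsto_exp_neg_sq_add z)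
  · rw [key]; simp
  · -- integrability of the derivative
    apply Integrable.mono' ((((integrable_exp_neg_mul_sq (by norm_num : (0:ℝ) < 1/2)).const_mul
      ((2 * ‖z‖) * Real.exp (‖z‖ ^ 2))).add
      (((integrable_mul_exp_neg_mul_sq (by norm_num : (0:ℝ) < 1/2)).const_mul
      (2 * Real.exp (‖z‖ ^ 2))))).integrableOn)
    · exact (Continuous.aestronglyMeasurable (by fun_prop))
    · filter_upwards [ae_restrict_mem measurableSet_Ioi] with u hu
      have hu0 : (0:ℝ) ≤ u := le_of_lt hu
      have h1 : ‖(-2 * (z + (u:ℂ)) * Complex.exp (-(z + (u:ℂ))^2))‖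
          ≤ (2 * ‖z‖ + 2 * u) * (Real.exp (‖z‖ ^ 2) * Real.exp (-(1/2) * u^2)) := by
        rw [norm_mul]
        apply mul_le_mul _ (norm_exp_neg_sq_add z u) (norm_nonneg _) (by positivity)
        rw [norm_mul]
        calc ‖(-2:ℂ)‖ * ‖z + u‖ ≤ 2 * (‖z‖ + u) := by
              rw [norm_neg]
              simp only [Complex.norm_ofNat]
              apply mul_le_mul_of_nonneg_left _ (by norm_num)
              calc ‖z + u‖ ≤ ‖z‖ + ‖(u:ℂ)‖ := norm_add_le _ _
                _ = ‖z‖ + u := by rw [Complex.norm_real, Real.norm_eq_abs, _root_.abs_of_nonneg hu0]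
          _ = 2 * ‖z‖ + 2 * u := by ring
      refine h1.trans (le_of_eq ?_)
      simp only [Pi.add_apply]
      ring

lemma psiF_hasDerivAt (z : ℂ) : HasDerivAt psiF (-Complex.exp (-z^2)) z := by
  have key := hasDerivAt_integral_of_dominated_loc_of_deriv_le
    (μ := MeasureTheory.volume.restrict (Set.Ioi (0:ℝ)))
    (F := fun (x : ℂ) (u : ℝ) => Complex.exp (-(x + (u:ℂ))^2))
    (F' := fun (x : ℂ) (u : ℝ) => -2 * (x + (u:ℂ)) * Complex.exp (-(x + (u:ℂ))^2))
    (x₀ := z) (s := Metric.ball z 1)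
    (bound := fun u => (2 * ‖z‖ + 2 + 2 * |u|) *
      (Real.exp ((‖z‖ + 1) ^ 2) * Real.exp (-(1/2) * u^2)))
    (Metric.ball_mem_nhds z one_pos)
    (Filter.Eventually.of_forall fun x => (cont_exp_neg_sq_add x).aestronglyMeasurable)
    (integrableOn_psiF z)
    (Continuous.aestronglyMeasurable (by fun_prop))
    ?_ ?_
    (Filter.Eventually.of_forall fun u x _ => deriv_inner x u)
  · have := key.2
    rw [psiF_integral_deriv z] at this
    exact this
  · -- bound
    apply Filter.Eventually.of_forall
    intro u x hx
    have hxz : ‖x‖ ≤ ‖z‖ + 1 := by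
      calc ‖x‖ = ‖z + (x - z)‖ := by ring_nf
        _ ≤ ‖z‖ + ‖x - z‖ := norm_add_le _ _
        _ ≤ ‖z‖ + 1 := by
            have := mem_ball_iff_norm.1 hx
            linarith
    have hb : ‖Complex.exp (-(x + (u:ℂ))^2)‖ ≤
        Real.exp ((‖z‖ + 1) ^ 2) * Real.exp (-(1/2) * u^2) := by
      refine (norm_exp_neg_sq_add x u).trans ?_
      apply mul_le_mul_of_nonneg_right _ (le_of_lt (Real.exp_pos _))
      apply Real.exp_le_exp.2
      have h0 : (0:ℝ) ≤ ‖x‖ := norm_nonneg x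
      nlinarith [norm_nonneg z]
    rw [norm_mul]
    apply mul_le_mul _ hb (norm_nonneg _) (by positivity)
    rw [norm_mul]
    simp only [norm_neg, Complex.norm_ofNat]
    calc (2:ℝ) * ‖x + u‖ ≤ 2 * (‖z‖ + 1 + |u|) := by
          apply mul_le_mul_of_nonneg_left _ (by norm_num)
          calc ‖x + u‖ ≤ ‖x‖ + ‖(u:ℂ)‖ := norm_add_le _ _
            _ ≤ ‖z‖ + 1 + |u| := by rw [Complex.norm_real, Real.norm_eq_abs]; linarith
      _ = 2 * ‖z‖ + 2 + 2 * |u| := by ring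
  · -- bound integrable
    apply MeasureTheory.Integrable.mono'
      ((((integrable_exp_neg_mul_sq (by norm_num : (0:ℝ) < 1/2)).const_mul
        ((2 * ‖z‖ + 2) * Real.exp ((‖z‖ + 1) ^ 2))).add
        ((integrable_mul_exp_neg_mul_sq (by norm_num : (0:ℝ) < 1/2)).const_mul
        (2 * Real.exp ((‖z‖ + 1) ^ 2)))).integrableOn)
    · apply Continuous.aestronglyMeasurable
      fun_prop
    · filter_upwards [ae_restrict_mem measurableSet_Ioi] with u hu
      have hu0 : (0:ℝ) ≤ u := le_of_lt hu
      rw [_root_.abs_of_nonneg hu0, Real.norm_eq_abs, Pi.add_apply]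
      rw [_root_.abs_of_nonneg (by positivity)]
      apply le_of_eq
      ring

lemma deriv_cerf_inner (t : ℝ) (x : ℂ) :
    HasDerivAt (fun w : ℂ => w * Complex.exp (-((t:ℂ) * w)^2))
      ((1 - 2 * (t:ℂ)^2 * x^2) * Complex.exp (-((t:ℂ) * x)^2)) x := by
  have h1 : HasDerivAt (fun w : ℂ => -((t:ℂ) * w)^2) (-2 * (t:ℂ)^2 * x) x := by
    have := (((hasDerivAt_id x).const_mul (t:ℂ)).pow 2).neg
    refine this.congr_deriv ?_
    simp only [id_eq]; ring
  have h2 := (hasDerivAt_id x).mul h1.cexp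
  refine h2.congr_deriv ?_
  simp only [id_eq]; ring

lemma cerf_integral_inner (z : ℂ) :
    ∫ t in (0:ℝ)..1, (1 - 2 * (t:ℂ)^2 * z^2) * Complex.exp (-((t:ℂ) * z)^2) =
      Complex.exp (-z^2) := by
  have hd : ∀ t ∈ Set.uIcc (0:ℝ) 1, HasDerivAt (fun t : ℝ => (t:ℂ) * Complex.exp (-((t:ℂ) * z)^2))
      ((1 - 2 * (t:ℂ)^2 * z^2) * Complex.exp (-((t:ℂ) * z)^2)) t := by
    intro t _
    have h1 : HasDerivAt (fun w : ℂ => w * Complex.exp (-(w * z)^2))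
        ((1 - 2 * (t:ℂ)^2 * z^2) * Complex.exp (-((t:ℂ) * z)^2)) (t:ℂ) := by
      have h1 : HasDerivAt (fun w : ℂ => -(w * z)^2) (-2 * z^2 * (t:ℂ)) (t:ℂ) := by
        have := (((hasDerivAt_id (t:ℂ)).mul_const z).pow 2).neg
        refine this.congr_deriv ?_
        simp only [id_eq]; ring
      have h2 := (hasDerivAt_id (t:ℂ)).mul h1.cexp
      refine h2.congr_deriv ?_
      simp only [id_eq]; ring_nf
    have := h1.comp_ofReal
    simpa using this
  have key := intervalIntegral.integral_eq_sub_of_hasDerivAt hd ?_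
  · rw [key]; simp
  · apply Continuous.intervalIntegrable
    fun_prop

lemma cerf_hasDerivAt (z : ℂ) :
    HasDerivAt cerf (2 / Real.sqrt Real.pi * Complex.exp (-z^2)) z := by
  have key := intervalIntegral.hasDerivAt_integral_of_dominated_loc_of_deriv_le
    (μ := MeasureTheory.volume) (a := (0:ℝ)) (b := 1)
    (F := fun (x : ℂ) (t : ℝ) => x * Complex.exp (-((t:ℂ) * x)^2))
    (F' := fun (x : ℂ) (t : ℝ) => (1 - 2 * (t:ℂ)^2 * x^2) * Complex.exp (-((t:ℂ) * x)^2))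
    (x₀ := z) (s := Metric.ball z 1)
    (bound := fun _ => (1 + 2 * (‖z‖ + 1)^2) * Real.exp ((‖z‖ + 1)^2))
    (Metric.ball_mem_nhds z one_pos)
    (Filter.Eventually.of_forall fun x => Continuous.aestronglyMeasurable (by fun_prop))
    (Continuous.intervalIntegrable (by fun_prop) _ _)
    (Continuous.aestronglyMeasurable (by fun_prop))
    ?_
    (intervalIntegrable_const)
    (Filter.Eventually.of_forall fun t _ x _ => deriv_cerf_inner t x)
  · have h2 := key.2
    rw [cerf_integral_inner z] at h2
    unfold cerf
    exact h2.const_mul _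
  · apply Filter.Eventually.of_forall
    intro t ht x hx
    have ht' : t ∈ Set.uIcc (0:ℝ) 1 := Set.uIoc_subset_uIcc ht
    have ht0 : 0 ≤ t := by
      rcases Set.mem_uIcc.1 ht' with h | h
      · exact h.1
      · linarith [h.1, h.2]
    have ht1 : t ≤ 1 := by
      rcases Set.mem_uIcc.1 ht' with h | h
      · exact h.2
      · linarith [h.1, h.2]
    have hxz : ‖x‖ ≤ ‖z‖ + 1 := by
      calc ‖x‖ = ‖z + (x - z)‖ := by ring_nf
        _ ≤ ‖z‖ + ‖x - z‖ := norm_add_le _ _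
        _ ≤ ‖z‖ + 1 := by
            have := mem_ball_iff_norm.1 hx
            linarith
    rw [norm_mul]
    have hb2 : ‖Complex.exp (-((t:ℂ) * x)^2)‖ ≤ Real.exp ((‖z‖ + 1)^2) := by
      rw [Complex.norm_exp]
      apply Real.exp_le_exp.2
      have hre : (-((t:ℂ) * x)^2).re = -(t^2 * (x.re^2 - x.im^2)) := by
        simp only [pow_two, Complex.neg_re, Complex.mul_re, Complex.mul_im,
          Complex.ofReal_re, Complex.ofReal_im]
        ring
      rw [hre]
      have habs : x.re^2 + x.im^2 ≤ (‖z‖ + 1)^2 := by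
        have : x.re^2 + x.im^2 = ‖x‖ ^ 2 := by
          rw [Complex.sq_norm, Complex.normSq_apply]; ring
        rw [this]
        apply pow_le_pow_left₀ (norm_nonneg x) hxz
      have ht2 : t^2 ≤ 1 := by nlinarith
      nlinarith [sq_nonneg (t * x.re), sq_nonneg x.im, sq_nonneg x.re,
        mul_nonneg (by nlinarith : (0:ℝ) ≤ 1 - t^2) (sq_nonneg x.im)]
    have hb1 : ‖(1 - 2 * (t:ℂ)^2 * x^2 : ℂ)‖ ≤ 1 + 2 * (‖z‖ + 1)^2 := by
      calc ‖(1 - 2 * (t:ℂ)^2 * x^2 : ℂ)‖ ≤ ‖(1:ℂ)‖ + ‖2 * (t:ℂ)^2 * x^2‖ := norm_sub_le _ _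
        _ ≤ 1 + 2 * (‖z‖ + 1)^2 := by
            simp only [norm_one, norm_mul, norm_pow, Complex.norm_real, Real.norm_eq_abs,
              Complex.norm_ofNat]
            have h1 : |t|^2 ≤ 1 := by
              rw [_root_.abs_of_nonneg ht0]
              nlinarith
            have h2 : ‖x‖ ^ 2 ≤ (‖z‖ + 1)^2 :=
              pow_le_pow_left₀ (norm_nonneg x) hxz 2
            nlinarith [norm_nonneg x, sq_nonneg (‖x‖)]
    calc ‖(1 - 2 * (t:ℂ)^2 * x^2 : ℂ)‖ * ‖Complex.exp (-((t:ℂ) * x)^2)‖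
        ≤ (1 + 2 * (‖z‖ + 1)^2) * Real.exp ((‖z‖ + 1)^2) :=
          mul_le_mul hb1 hb2 (norm_nonneg _) (by positivity)

lemma sqrt_pi_pos : 0 < Real.sqrt Real.pi := Real.sqrt_pos.2 Real.pi_pos

lemma cerf_zero : cerf 0 = 0 := by
  unfold cerf
  simp

lemma psiF_zero : psiF 0 = (Real.sqrt Real.pi : ℂ) / 2 := by
  unfold psiF
  have h := integral_gaussian_complex_Ioi (b := 1) (by norm_num)
  simp only [neg_mul, one_mul] at h
  have h2 : ∀ u : ℝ, Complex.exp (-((0:ℂ) + (u:ℂ))^2) = Complex.exp (-(u:ℂ)^2) := by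
    intro u; rw [zero_add]
  rw [MeasureTheory.setIntegral_congr_fun measurableSet_Ioi (fun u _ => h2 u), h]
  congr 1
  rw [div_one, Real.sqrt_eq_rpow, Complex.ofReal_cpow Real.pi_pos.le (1/2)]
  norm_num

lemma key_identity (w : ℂ) :
    1 - cerf w = 2 / (Real.sqrt Real.pi : ℂ) * psiF w := by
  have hf : ∀ x : ℂ, HasDerivAt (fun y => cerf y + 2 / (Real.sqrt Real.pi : ℂ) * psiF y) 0 x := by
    intro x
    have h1 := cerf_hasDerivAt x
    have h2 := (psiF_hasDerivAt x).const_mul (2 / (Real.sqrt Real.pi : ℂ))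
    have h3 := h1.add h2
    refine h3.congr_deriv ?_
    ring
  have hconst : ∀ x : ℂ, cerf x + 2 / (Real.sqrt Real.pi : ℂ) * psiF x
      = cerf 0 + 2 / (Real.sqrt Real.pi : ℂ) * psiF 0 := by
    intro x
    exact is_const_of_deriv_eq_zero (fun y => (hf y).differentiableAt)
      (fun y => (hf y).deriv) x 0
  have h0 : cerf 0 + 2 / (Real.sqrt Real.pi : ℂ) * psiF 0 = 1 := by
    rw [cerf_zero, psiF_zero, zero_add]
    have hne : (Real.sqrt Real.pi : ℂ) ≠ 0 := by
      exact_mod_cast ne_of_gt sqrt_pi_pos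
    field_simp
  have := hconst w
  rw [h0] at this
  linear_combination -this

lemma exp_neg_real_mul_I (x : ℝ) :
    Complex.exp (-(x : ℂ) * Complex.I) = (Real.cos x : ℂ) - (Real.sin x : ℂ) * Complex.I := by
  have h : (-(x : ℂ)) = ((-x : ℝ) : ℂ) := by push_cast; ring
  rw [h, Complex.exp_mul_I, Complex.ofReal_neg, Complex.cos_neg, Complex.sin_neg,
    ← Complex.ofReal_cos, ← Complex.ofReal_sin]
  ring

theorem F_bound_first_quadrant (z : ℂ) (h1 : 0 ≤ z.arg) (h2 : z.arg ≤ Real.pi / 2) :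
    ‖Ffun z‖ ≤ 1 / 2 := by
  set w : ℂ := Complex.exp (-(Real.pi / 4 : ℂ) * Complex.I) * z with hw
  have hz_im : 0 ≤ z.im := Complex.arg_nonneg_iff.1 h1
  have hz_re : 0 ≤ z.re := Complex.abs_arg_le_pi_div_two_iff.1 (by rwa [_root_.abs_of_nonneg h1])
  have hcast : (-(Real.pi / 4 : ℂ)) = -((Real.pi / 4 : ℝ) : ℂ) := by push_cast; ring
  have hexp : Complex.exp (-(Real.pi / 4 : ℂ) * Complex.I)
      = (Real.cos (Real.pi / 4) : ℂ) - (Real.sin (Real.pi / 4) : ℂ) * Complex.I := by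
    rw [hcast]; exact exp_neg_real_mul_I (Real.pi / 4)
  -- Re w ≥ 0
  have hre : 0 ≤ w.re := by
    have : w.re = Real.cos (Real.pi / 4) * z.re + Real.sin (Real.pi / 4) * z.im := by
      rw [hw, hexp]
      simp only [Complex.mul_re, Complex.sub_re, Complex.sub_im, Complex.mul_im,
        Complex.ofReal_re, Complex.ofReal_im, Complex.I_re, Complex.I_im]
      ring
    rw [this]
    have hc : 0 ≤ Real.cos (Real.pi / 4) := by
      rw [Real.cos_pi_div_four]; positivity
    have hs : 0 ≤ Real.sin (Real.pi / 4) := by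
      rw [Real.sin_pi_div_four]; positivity
    positivity
  -- w² = -I z²
  have hw2 : w ^ 2 = -Complex.I * z ^ 2 := by
    rw [hw, mul_pow]
    congr 1
    have h2 : Complex.exp (-(Real.pi / 4 : ℂ) * Complex.I) ^ 2
        = Complex.exp ((2 : ℕ) * (-(Real.pi / 4 : ℂ) * Complex.I)) := by
      rw [Complex.exp_nat_mul]
    rw [h2]
    have h3 : ((2 : ℕ) : ℂ) * (-(Real.pi / 4 : ℂ) * Complex.I) = -((Real.pi/2 : ℝ) : ℂ) * Complex.I := by
      push_cast; ring
    rw [h3, exp_neg_real_mul_I, Real.cos_pi_div_two, Real.sin_pi_div_two]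
    simp
  -- rewrite Ffun
  have heq : (fun u : ℝ => Complex.exp (w ^ 2) * Complex.exp (-(w + (u:ℂ)) ^ 2))
      = fun u : ℝ => Complex.exp (w ^ 2 + -(w + (u:ℂ)) ^ 2) := by
    funext u
    rw [← Complex.exp_add]
  have hF : Ffun z = ((Real.sqrt Real.pi : ℂ))⁻¹ *
      ∫ u in Set.Ioi (0:ℝ), Complex.exp (w ^ 2 + -(w + (u:ℂ)) ^ 2) := by
    have hFr : Ffun z = Complex.exp (w ^ 2) * ((2 / (Real.sqrt Real.pi : ℂ) * psiF w) / 2) := by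
      unfold Ffun Fr
      rw [← hw, ← key_identity w, ← hw2]
    rw [hFr]
    have : Complex.exp (w ^ 2) * ((2 / (Real.sqrt Real.pi : ℂ) * psiF w) / 2)
        = ((Real.sqrt Real.pi : ℂ))⁻¹ * (Complex.exp (w ^ 2) * psiF w) := by
      ring
    rw [this]
    congr 1
    unfold psiF
    rw [← MeasureTheory.integral_const_mul, heq]
  -- integrability of the combined integrand
  have hInt1 : MeasureTheory.IntegrableOn
      (fun u : ℝ => Complex.exp (w ^ 2 + -(w + (u:ℂ)) ^ 2)) (Set.Ioi 0) := by
    rw [← heq]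
    exact (integrableOn_psiF w).const_mul (Complex.exp (w ^ 2))
  -- norm bound
  rw [hF, norm_mul]
  have hnormc : ‖((Real.sqrt Real.pi : ℂ))⁻¹‖ = (Real.sqrt Real.pi)⁻¹ := by
    rw [norm_inv, Complex.norm_real, Real.norm_eq_abs,
      _root_.abs_of_nonneg sqrt_pi_pos.le]
  rw [hnormc]
  have hbound : ‖∫ u in Set.Ioi (0:ℝ), Complex.exp (w ^ 2 + -(w + (u:ℂ)) ^ 2)‖
      ≤ Real.sqrt Real.pi / 2 := by
    calc ‖∫ u in Set.Ioi (0:ℝ), Complex.exp (w ^ 2 + -(w + (u:ℂ)) ^ 2)‖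
        ≤ ∫ u in Set.Ioi (0:ℝ), ‖Complex.exp (w ^ 2 + -(w + (u:ℂ)) ^ 2)‖ :=
          MeasureTheory.norm_integral_le_integral_norm _
      _ ≤ ∫ u in Set.Ioi (0:ℝ), Real.exp (-1 * u ^ 2) := by
          apply MeasureTheory.setIntegral_mono_on hInt1.norm
            ((integrable_exp_neg_mul_sq one_pos).integrableOn) measurableSet_Ioi
          intro u hu
          rw [Complex.norm_exp]
          apply Real.exp_le_exp.2
          have hre2 : (w ^ 2 + -(w + (u:ℂ)) ^ 2).re = -2 * u * w.re - u ^ 2 := by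
            simp only [pow_two, Complex.add_re, Complex.neg_re, Complex.mul_re,
              Complex.add_im, Complex.ofReal_re, Complex.ofReal_im]
            ring
          rw [hre2]
          have hu0 : (0:ℝ) ≤ u := le_of_lt hu
          nlinarith [mul_nonneg (mul_nonneg (by norm_num : (0:ℝ) ≤ 2) hu0) hre]
      _ = Real.sqrt Real.pi / 2 := by
          rw [integral_gaussian_Ioi]
          norm_num
  calc (Real.sqrt Real.pi)⁻¹ * ‖∫ u in Set.Ioi (0:ℝ), Complex.exp (w ^ 2 + -(w + (u:ℂ)) ^ 2)‖
      ≤ (Real.sqrt Real.pi)⁻¹ * (Real.sqrt Real.pi / 2) :=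
        mul_le_mul_of_nonneg_left hbound (by positivity)
    _ = 1 / 2 := by
        field_simp
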